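/- Two consistent queryless schedules S₁ and S₂ over the same set of transactions are equivalent if and only if they have the same set of basic input trees, i.e., if and only if N^min_I(S₁) = N^min_I(S₂), N^max_I(S₁) = N^max_I(S₂), E^min_I(S₁) = E^min_I(S₂), and E^max_I(S₁) = E^max_I(S₂). -/

import Mathlib

attribute [local instance] Classical.propDecidable

/-! ## Data model: nodes, labels, edges, document trees -/

abbrev Node := ℕ
abbrev Label := ℕ
abbrev Edge := Node × Label × Node

/-- A candidate document tree: a finite node set, a finite edge set, a root. -/
structure Tree3 where
  N : Finset Node
  E : Finset Edge
  root : Node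

/-- The edge-step relation of a set of labelled edges. -/
def estep (E : Set Edge) (a b : Node) : Prop := ∃ l : Label, (a, l, b) ∈ E

/-- `T` is a document tree: the root is a node, edges connect nodes, every node has at
most one incoming edge, the root has none, and every node is reachable from the root
(edges are directed from parent to child). -/
def IsDT (T : Tree3) : Prop :=
  T.root ∈ T.N ∧
  (∀ e ∈ T.E, e.1 ∈ T.N ∧ e.2.2 ∈ T.N) ∧
  (∀ e ∈ T.E, ∀ e' ∈ T.E, e.2.2 = e'.2.2 → e = e') ∧
  (∀ e ∈ T.E, e.2.2 ≠ T.root) ∧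
  (∀ n ∈ T.N, Relation.ReflTransGen (estep (↑T.E)) T.root n)

/-! ## Update operations and queryless schedules -/

inductive Op where
  | add : Node → Label → Node → Op
  | del : Node → Label → Node → Op
deriving DecidableEq

/-- Apply an update operation to a tree; `none` when the operation is undefined. -/
noncomputable def applyOp (o : Op) (T : Tree3) : Option Tree3 :=
  match o with
  | Op.add m l n =>
      let T' : Tree3 := ⟨insert n T.N, insert (m, l, n) T.E, T.root⟩
      if (m, l, n) ∈ T.E ∨ ¬ IsDT T' then none else some T'
  | Op.del m l n =>
      let T' : Tree3 := ⟨T.N.erase n, T.E.erase (m, l, n), T.root⟩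
      if (m, l, n) ∉ T.E ∨ ¬ IsDT T' then none else some T'

/-- An action is an operation tagged with a transaction identifier. -/
abbrev QLAction := Op × ℕ

/-- A queryless (QL) schedule is a finite sequence of actions. -/
abbrev QLSchedule := List QLAction

/-- Apply a QL schedule to a tree, operation by operation. -/
noncomputable def applyQL : QLSchedule → Tree3 → Option Tree3
  | [], T => some T
  | a :: rest, T => (applyOp a.1 T).bind (applyQL rest)

/-- `S[T]` is defined (and `T` is a document tree). -/
def DefinedOn (S : QLSchedule) (T : Tree3) : Prop := IsDT T ∧ (applyQL S T).isSome

/-- A QL schedule is consistent iff it is defined on at least one document tree. -/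
def ConsistentQL (S : QLSchedule) : Prop := ∃ T, DefinedOn S T

def Op.src : Op → Node
  | Op.add m _ _ => m
  | Op.del m _ _ => m

def Op.tgt : Op → Node
  | Op.add _ _ n => n
  | Op.del _ _ n => n

def Op.edge : Op → Edge
  | Op.add m l n => (m, l, n)
  | Op.del m l n => (m, l, n)

/-- The list of operations of a QL schedule. -/
def ops (S : QLSchedule) : List Op := S.map Prod.fst

/-- The operation containing the first occurrence of the node `x` in `S`, if any. -/
def firstNodeOp (S : QLSchedule) (x : Node) : Option Op :=
  (ops S).find? (fun o => (o.src == x) || (o.tgt == x))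

/-- The operation containing the last occurrence of the node `x` in `S`, if any. -/
def lastNodeOp (S : QLSchedule) (x : Node) : Option Op :=
  (ops S).reverse.find? (fun o => (o.src == x) || (o.tgt == x))

/-- The operation containing the first occurrence of the edge `e` in `S`, if any. -/
def firstEdgeOp (S : QLSchedule) (e : Edge) : Option Op :=
  (ops S).find? (fun o => o.edge == e)

/-- The operation containing the last occurrence of the edge `e` in `S`, if any. -/
def lastEdgeOp (S : QLSchedule) (e : Edge) : Option Op :=
  (ops S).reverse.find? (fun o => o.edge == e)

/-- Some edge with target `x` occurs in `S`. -/
def occursTgt (S : QLSchedule) (x : Node) : Prop := ∃ o ∈ ops S, o.tgt = x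

/-- `N^min_I(S)`. -/
def NminI (S : QLSchedule) : Set Node :=
  {x | ∃ l n, firstNodeOp S x = some (Op.add x l n)} ∪
  {x | ∃ l n, firstNodeOp S x = some (Op.del x l n)} ∪
  {x | ∃ m l, firstNodeOp S x = some (Op.del m l x)}

/-- `N^max_I(S)`. -/
def NmaxI (S : QLSchedule) : Set Node :=
  {x | ¬ ∃ m l, firstNodeOp S x = some (Op.add m l x)}

/-- `E^min_I(S)`. -/
def EminI (S : QLSchedule) : Set Edge :=
  {e | firstEdgeOp S e = some (Op.del e.1 e.2.1 e.2.2)}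

/-- `E^max_I(S)`. -/
def EmaxI (S : QLSchedule) : Set Edge :=
  EminI S ∪ {e | ¬ occursTgt S e.1 ∧ ¬ occursTgt S e.2.2}

/-- `N^min_O(S)`. -/
def NminO (S : QLSchedule) : Set Node :=
  {x | ∃ l n, lastNodeOp S x = some (Op.del x l n)} ∪
  {x | ∃ l n, lastNodeOp S x = some (Op.add x l n)} ∪
  {x | ∃ m l, lastNodeOp S x = some (Op.add m l x)}

/-- `N^max_O(S)`. -/
def NmaxO (S : QLSchedule) : Set Node :=
  {x | ¬ ∃ m l, lastNodeOp S x = some (Op.del m l x)}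

/-- `E^min_O(S)`. -/
def EminO (S : QLSchedule) : Set Edge :=
  {e | lastEdgeOp S e = some (Op.add e.1 e.2.1 e.2.2)}

/-- `E^max_O(S)`. -/
def EmaxO (S : QLSchedule) : Set Edge :=
  EminO S ∪ {e | ¬ occursTgt S e.1 ∧ ¬ occursTgt S e.2.2}

/-- `ADD(S)`: edges whose last occurrence in `S` is an addition. -/
def ADDs (S : QLSchedule) : Set Edge :=
  {e | lastEdgeOp S e = some (Op.add e.1 e.2.1 e.2.2)}

/-- `DEL(S)`: edges whose last occurrence in `S` is a deletion. -/
def DELs (S : QLSchedule) : Set Edge :=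
  {e | lastEdgeOp S e = some (Op.del e.1 e.2.1 e.2.2)}

/-- `T` is a basic input tree of `S`. -/
def BasicInput (S : QLSchedule) (T : Tree3) : Prop :=
  IsDT T ∧ NminI S ⊆ ↑T.N ∧ ↑T.N ⊆ NmaxI S ∧ EminI S ⊆ ↑T.E ∧ ↑T.E ⊆ EmaxI S

/-- `T` is a basic output tree of `S`. -/
def BasicOutput (S : QLSchedule) (T : Tree3) : Prop :=
  IsDT T ∧ NminO S ⊆ ↑T.N ∧ ↑T.N ⊆ NmaxO S ∧ EminO S ⊆ ↑T.E ∧ ↑T.E ⊆ EmaxO S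

/-- The C-condition (nine clauses). -/
def CCond (S : QLSchedule) : Prop :=
  (∀ i j (n l₁ n₁ n₂ l₂ : ℕ), i < j →
      (ops S)[i]? = some (Op.add n l₁ n₁) → (ops S)[j]? = some (Op.add n₂ l₂ n) →
      ∃ k : ℕ, i < k ∧ k < j ∧ (ops S)[k]? = some (Op.del n l₁ n₁)) ∧
  (∀ i j (n₁ l₁ n n₂ l₂ : ℕ), i < j →
      (ops S)[i]? = some (Op.add n₁ l₁ n) → (ops S)[j]? = some (Op.add n₂ l₂ n) →
      ∃ k : ℕ, i < k ∧ k < j ∧ (ops S)[k]? = some (Op.del n₁ l₁ n)) ∧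
  (∀ i j (n l₁ n₁ n₂ l₂ : ℕ), i < j →
      (ops S)[i]? = some (Op.add n l₁ n₁) → (ops S)[j]? = some (Op.del n₂ l₂ n) →
      ∃ k : ℕ, i < k ∧ k < j ∧ (ops S)[k]? = some (Op.del n l₁ n₁)) ∧
  (∀ i j (n₁ l₁ n l₂ n₂ : ℕ), i < j →
      (ops S)[i]? = some (Op.add n₁ l₁ n) → (ops S)[j]? = some (Op.del n l₂ n₂) →
      ∃ k : ℕ, i < k ∧ k < j ∧ (ops S)[k]? = some (Op.add n l₂ n₂)) ∧
  (∀ i j (n₁ l₁ n n₂ l₂ : ℕ), i < j → (n₁, l₁) ≠ (n₂, l₂) →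
      (ops S)[i]? = some (Op.add n₁ l₁ n) → (ops S)[j]? = some (Op.del n₂ l₂ n) →
      ∃ k : ℕ, i < k ∧ k < j ∧ (ops S)[k]? = some (Op.del n₁ l₁ n)) ∧
  (∀ i j (n l₁ n₁ n₂ l₂ : ℕ), i < j →
      (ops S)[i]? = some (Op.del n l₁ n₁) → (ops S)[j]? = some (Op.add n₂ l₂ n) →
      ∃ k : ℕ, ∃ n₃ l₃ : ℕ, i < k ∧ k < j ∧ (ops S)[k]? = some (Op.del n₃ l₃ n)) ∧
  (∀ i j (n₁ l₁ n l₂ n₂ : ℕ), i < j →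
      (ops S)[i]? = some (Op.del n₁ l₁ n) → (ops S)[j]? = some (Op.add n l₂ n₂) →
      ∃ k : ℕ, ∃ n₃ l₃ : ℕ, i < k ∧ k < j ∧ (ops S)[k]? = some (Op.add n₃ l₃ n)) ∧
  (∀ i j (n₁ l₁ n l₂ n₂ : ℕ), i < j →
      (ops S)[i]? = some (Op.del n₁ l₁ n) → (ops S)[j]? = some (Op.del n l₂ n₂) →
      ∃ k : ℕ, ∃ n₃ l₃ : ℕ, i < k ∧ k < j ∧ (ops S)[k]? = some (Op.add n₃ l₃ n)) ∧
  (∀ i j (n₁ l₁ n n₂ l₂ : ℕ), i < j →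
      (ops S)[i]? = some (Op.del n₁ l₁ n) → (ops S)[j]? = some (Op.del n₂ l₂ n) →
      ∃ k : ℕ, i < k ∧ k < j ∧ (ops S)[k]? = some (Op.add n₂ l₂ n))

/-! ## Transactions, equivalence and serializability of QL schedules -/

/-- Two QL schedules are interleavings of the same set of transactions: for every
transaction identifier, the subsequences of actions with that identifier coincide. -/
def SameTrans (S S' : QLSchedule) : Prop :=
  ∀ t : ℕ, S.filter (fun a => a.2 == t) = S'.filter (fun a => a.2 == t)

/-- A schedule is serial iff the actions of each transaction occur consecutively. -/
def Serial (S : QLSchedule) : Prop :=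
  ∀ i j k : ℕ, i ≤ j → j ≤ k →
    ∀ a b c : QLAction, S[i]? = some a → S[j]? = some b → S[k]? = some c →
      a.2 = c.2 → b.2 = a.2

/-- Two QL schedules are equivalent: they are defined on the same non-empty set of
document trees and produce the same output tree on each of them. -/
def EquivQL (S S' : QLSchedule) : Prop :=
  (∃ T, DefinedOn S T) ∧ ∀ T, IsDT T → applyQL S T = applyQL S' T

/-- A QL schedule is serializable iff it is equivalent to a serial schedule over the
same set of transactions. -/
def SerializableQL (S : QLSchedule) : Prop :=
  ∃ S', Serial S' ∧ SameTrans S S' ∧ EquivQL S S'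

/-! ## Paths and forests -/

/-- `SPath G m lp n`: there is a directed path from `m` to `n` in the edge set `G`
whose label path is `lp`. -/
inductive SPath (G : Set Edge) : Node → List Label → Node → Prop where
  | nil (n : Node) : SPath G n [] n
  | cons {m n n' : Node} {l : Label} {lp : List Label} :
      (m, l, n) ∈ G → SPath G n lp n' → SPath G m (l :: lp) n'

/-- A set of edges is a forest: no two distinct edges share a target, and
there is no (non-trivial) directed cycle. -/
def IsForest (G : Set Edge) : Prop :=
  (∀ e ∈ G, ∀ e' ∈ G, e.2.2 = e'.2.2 → e = e') ∧
  ¬ ∃ (n : Node) (lp : List Label), lp ≠ [] ∧ SPath G n lp n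

/-! ## Path expressions -/

inductive Step where
  | star : Step
  | lab : Label → Step
deriving DecidableEq

/-- Path expressions: `ε`, `pe/f` and `pe//f` (a single step `f` is `ε/f`). -/
inductive PathExpr where
  | eps : PathExpr
  | child : PathExpr → Step → PathExpr
  | desc : PathExpr → Step → PathExpr
deriving DecidableEq

def Step.mtch : Step → Label → Prop
  | Step.star, _ => True
  | Step.lab l, l' => l = l'

def Step.mtchB : Step → Label → Bool
  | Step.star, _ => true
  | Step.lab l, l' => l == l'

/-- The set `L(pe)` of label paths represented by a path expression
(a label path is a list of labels). -/
def PathExpr.lang : PathExpr → Set (List Label)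
  | PathExpr.eps => {[]}
  | PathExpr.child pe f => {w | ∃ u l, u ∈ pe.lang ∧ f.mtch l ∧ w = u ++ [l]}
  | PathExpr.desc pe f => {w | ∃ u v l, u ∈ pe.lang ∧ f.mtch l ∧ w = u ++ v ++ [l]}

/-- `SOP` on a *reversed* label path. -/
def SOPr : PathExpr → List Label → Set PathExpr
  | pe, [] => {pe}
  | PathExpr.eps, _ :: _ => ∅
  | PathExpr.child pe f, l :: lp => if f.mtchB l then SOPr pe lp else ∅
  | PathExpr.desc pe f, l :: lp =>
      if f.mtchB l then SOPr pe lp ∪ SOPr (PathExpr.desc pe Step.star) lp else ∅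
termination_by pe lp => lp.length

/-- `SOP(pe)_lp`: the set of non-empty `lp`-prefixes of `pe`. -/
def SOP (pe : PathExpr) (lp : List Label) : Set PathExpr := SOPr pe lp.reverse

/-- `L(SOP(pe)_lp)`. -/
def LSOP (pe : PathExpr) (lp : List Label) : Set (List Label) :=
  ⋃ pe' ∈ SOP pe lp, pe'.lang

/-- `pe/lp`: append a label path to a path expression with `/` separators. -/
def PathExpr.appendLP : PathExpr → List Label → PathExpr
  | pe, [] => pe
  | pe, l :: lp => PathExpr.appendLP (PathExpr.child pe (Step.lab l)) lp

/-- The prefixes of a path expression (including `ε`). -/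
def PathExpr.prefixes : PathExpr → Set PathExpr
  | PathExpr.eps => {PathExpr.eps}
  | PathExpr.child pe f => insert (PathExpr.child pe f) pe.prefixes
  | PathExpr.desc pe f => insert (PathExpr.desc pe f) pe.prefixes

/-! ## Schedules with queries -/

inductive GOp where
  | query : Node → PathExpr → GOp
  | add : Node → Label → Node → GOp
  | del : Node → Label → Node → GOp

abbrev GAction := GOp × ℕ

/-- A (general) schedule is a finite sequence of query/add/del actions. -/
abbrev Schedule := List GAction

def GOp.toOp? : GOp → Option Op
  | GOp.query _ _ => none
  | GOp.add m l n => some (Op.add m l n)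
  | GOp.del m l n => some (Op.del m l n)

/-- The QL schedule of a schedule: remove all query actions. -/
def qlOf (S : Schedule) : QLSchedule :=
  S.filterMap (fun a => (a.1.toOp?).map (fun o => (o, a.2)))

/-- The answer of `query(n,pe)` on a tree `T`. -/
def queryAnswer (n : Node) (pe : PathExpr) (T : Tree3) : Set Node :=
  {n' | n' ∈ T.N ∧ ∃ lp, SPath (↑T.E) n lp n' ∧ lp ∈ pe.lang}

/-- A schedule is consistent iff its QL schedule is. -/
def ConsistentSched (S : Schedule) : Prop := ConsistentQL (qlOf S)

/-- Run a schedule on a tree: the final tree together with, for each query (in order),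
its transaction identifier and its answer; `none` if some update is undefined. -/
noncomputable def runQ : Schedule → Tree3 → Option (Tree3 × List (ℕ × Set Node))
  | [], T => some (T, [])
  | (GOp.query n pe, t) :: rest, T =>
      (runQ rest T).map (fun p => (p.1, (t, queryAnswer n pe T) :: p.2))
  | (GOp.add m l n, _) :: rest, T =>
      (applyOp (Op.add m l n) T).bind (runQ rest)
  | (GOp.del m l n, _) :: rest, T =>
      (applyOp (Op.del m l n) T).bind (runQ rest)

/-- Two schedules are equivalent: defined on the same non-empty set of document trees,
and on each such tree they produce the same output tree and, per transaction, the same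
sequence of query answers. -/
def EquivSched (S₁ S₂ : Schedule) : Prop :=
  (∃ T, IsDT T ∧ (runQ S₁ T).isSome) ∧
  ∀ T, IsDT T →
    ((runQ S₁ T).isSome ↔ (runQ S₂ T).isSome) ∧
    ∀ p₁ p₂, runQ S₁ T = some p₁ → runQ S₂ T = some p₂ →
      p₁.1 = p₂.1 ∧
      ∀ t : ℕ, (p₁.2.filter (fun x => x.1 == t)).map Prod.snd
             = (p₂.2.filter (fun x => x.1 == t)).map Prod.snd

/-- Two schedules are interleavings of the same set of transactions. -/
def SameTransG (S S' : Schedule) : Prop :=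
  ∀ t : ℕ, S.filter (fun a => a.2 == t) = S'.filter (fun a => a.2 == t)

/-- A schedule is serial iff the actions of each transaction occur consecutively. -/
def SerialG (S : Schedule) : Prop :=
  ∀ i j k : ℕ, i ≤ j → j ≤ k →
    ∀ a b c : GAction, S[i]? = some a → S[j]? = some b → S[k]? = some c →
      a.2 = c.2 → b.2 = a.2

/-- A schedule is serializable iff it is equivalent to a serial schedule over the same
set of transactions. -/
def SerializableSched (S : Schedule) : Prop :=
  ∃ S', SerialG S' ∧ SameTransG S S' ∧ EquivSched S S'

/-- `E^min(S^Q)` where `Q` is the action at position `i` of `S`. -/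
def EminSQ (S : Schedule) (i : ℕ) : Set Edge :=
  (EminI (qlOf S) \ DELs (qlOf (S.take i))) ∪ ADDs (qlOf (S.take i))

/-- `E^max(S^Q)` where `Q` is the action at position `i` of `S`. -/
def EmaxSQ (S : Schedule) (i : ℕ) : Set Edge :=
  (EmaxI (qlOf S) \ DELs (qlOf (S.take i))) ∪ ADDs (qlOf (S.take i))

/-- `x` is a non-building-node of `S`: some `add(m,l,x)` or `del(m,l,x)` occurs in `S`. -/
def NonBuilding (S : Schedule) (x : Node) : Prop :=
  ∃ a ∈ S, ∃ m l, a.1 = GOp.add m l x ∨ a.1 = GOp.del m l x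

/-- `x` is a node of the graph (edge set) `G`. -/
def NodeOfGraph (G : Set Edge) (x : Node) : Prop := ∃ e ∈ G, e.1 = x ∨ e.2.2 = x

/-- `x` has a parent in the edge set `G`. -/
def HasParent (G : Set Edge) (x : Node) : Prop := ∃ e ∈ G, e.2.2 = x

/-- `PQRN(S,Q)` for the query `Q = query(n,pe)` at position `i` of `S`:
the nodes `m` of the graph `E^min(S^Q)` that are non-building-nodes, whose root
ancestor `r` in the forest `E^min(S^Q)` (the node with no parent from which `m` is
reachable, via the label path `ALabel(S^Q,m)`) is a building-node different from `n`,
and such that `L(SOP(pe)_{ALabel(S^Q,m)}) ≠ ∅`. -/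
def PQRN (S : Schedule) (i : ℕ) (n : Node) (pe : PathExpr) : Set Node :=
  {m | NodeOfGraph (EminSQ S i) m ∧ NonBuilding S m ∧
       ∃ r lp, SPath (EminSQ S i) r lp m ∧ ¬ HasParent (EminSQ S i) r ∧
         ¬ NonBuilding S r ∧ r ≠ n ∧ LSOP pe lp ≠ ∅}

/-- The answer of the query at position `i` of `S` when `S` is applied to `T`
(the query is evaluated on the tree obtained by applying the actions before it). -/
noncomputable def answerAt (S : Schedule) (i : ℕ) (T : Tree3) : Option (Set Node) :=
  match S[i]? with
  | some (GOp.query n pe, _) => (applyQL (qlOf (S.take i)) T).map (queryAnswer n pe)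
  | _ => none

/-! ### Auxiliary lemmas -/

section AuxLemmas

lemma reach_mono' {G G' : Set Edge} (h : G ⊆ G') {a b : Node}
    (hr : Relation.ReflTransGen (estep G) a b) :
    Relation.ReflTransGen (estep G') a b := by
  refine Relation.ReflTransGen.mono ?_ _ _ hr
  rintro x y ⟨l, hl⟩
  exact ⟨l, h hl⟩

lemma not_self_loop {T : Tree3} (hT : IsDT T) {a : Node} {l : Label} :
    (a, l, a) ∉ T.E := by
  intro hmem
  obtain ⟨hroot, hend, huniq, hnr, hreach⟩ := hT
  have key : ∀ b, Relation.ReflTransGen (estep (↑T.E)) T.root b → b ≠ a := by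
    intro b hb
    induction hb with
    | refl =>
        intro h
        exact hnr _ hmem (by simpa using h.symm)
    | @tail x y hx he ih =>
        intro hc
        obtain ⟨l', he'⟩ := he
        have h2 : (x, l', y) = (a, l, a) :=
          huniq _ (Finset.mem_coe.mp he') _ hmem hc
        exact ih (by simpa using congrArg Prod.fst h2)
  exact key a (hreach a (hend _ hmem).2) rfl

lemma no_parent_root {T : Tree3} (hT : IsDT T) {n : Node} (hn : n ∈ T.N)
    (h : ∀ e ∈ T.E, e.2.2 ≠ n) : n = T.root := by
  rcases (hT.2.2.2.2 n hn).cases_tail with h1 | ⟨b, _, he⟩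
  · exact h1
  · obtain ⟨l, hl⟩ := he
    exact absurd rfl (h _ (Finset.mem_coe.mp hl))

lemma add_ok {T T' : Tree3} {m n : Node} {l : Label} (hT : IsDT T)
    (h : applyOp (Op.add m l n) T = some T') :
    T' = ⟨insert n T.N, insert (m, l, n) T.E, T.root⟩ ∧ (m, l, n) ∉ T.E ∧
    IsDT ⟨insert n T.N, insert (m, l, n) T.E, T.root⟩ ∧ m ∈ T.N ∧ n ∉ T.N ∧ m ≠ n := by
  simp only [applyOp] at h
  split_ifs at h with hc
  push_neg at hc
  obtain ⟨hne, hDT'⟩ := hc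
  obtain rfl : (⟨insert n T.N, insert (m, l, n) T.E, T.root⟩ : Tree3) = T' :=
    Option.some.inj h
  have hmn : m ≠ n := by
    rintro rfl
    exact not_self_loop hDT' (Finset.mem_insert_self _ _)
  have hmN : m ∈ T.N := by
    have := (hDT'.2.1 (m, l, n) (Finset.mem_insert_self _ _)).1
    simpa [Finset.mem_insert, hmn] using this
  have hnN : n ∉ T.N := by
    intro hn
    have hnoin : ∀ e ∈ T.E, e.2.2 ≠ n := by
      intro e heE hetgt
      have : e = (m, l, n) :=
        hDT'.2.2.1 e (Finset.mem_insert_of_mem heE) (m, l, n)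
          (Finset.mem_insert_self _ _) hetgt
      exact hne (this ▸ heE)
    have hroot : n = T.root := no_parent_root hT hn hnoin
    exact hDT'.2.2.2.1 (m, l, n) (Finset.mem_insert_self _ _) hroot
  exact ⟨rfl, hne, hDT', hmN, hnN, hmn⟩

lemma del_ok {T T' : Tree3} {m n : Node} {l : Label} (hT : IsDT T)
    (h : applyOp (Op.del m l n) T = some T') :
    T' = ⟨T.N.erase n, T.E.erase (m, l, n), T.root⟩ ∧ (m, l, n) ∈ T.E ∧
    IsDT ⟨T.N.erase n, T.E.erase (m, l, n), T.root⟩ ∧ m ≠ n ∧ n ≠ T.root ∧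
    (∀ e ∈ T.E, e.1 ≠ n) ∧ (∀ e ∈ T.E, e.2.2 = n → e = (m, l, n)) ∧
    m ∈ T.N ∧ n ∈ T.N := by
  simp only [applyOp] at h
  split_ifs at h with hc
  push_neg at hc
  obtain ⟨hmem, hDT'⟩ := hc
  obtain rfl : (⟨T.N.erase n, T.E.erase (m, l, n), T.root⟩ : Tree3) = T' :=
    Option.some.inj h
  have hmn : m ≠ n := fun h' => not_self_loop hT (h' ▸ hmem)
  have hout : ∀ e ∈ T.E, e.1 ≠ n := by
    intro e heE h1
    have hnedel : e ≠ (m, l, n) := by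
      intro h'
      exact hmn (by rw [h'] at h1; exact h1)
    have heE' : e ∈ T.E.erase (m, l, n) := Finset.mem_erase.mpr ⟨hnedel, heE⟩
    have := (hDT'.2.1 e heE').1
    rw [h1] at this
    exact Finset.notMem_erase _ _ this
  refine ⟨rfl, hmem, hDT', hmn, ?_, hout, ?_, (hT.2.1 _ hmem).1, (hT.2.1 _ hmem).2⟩
  · exact fun h' => hT.2.2.2.1 (m, l, n) hmem h'
  · exact fun e heE htgt => hT.2.2.1 e heE (m, l, n) hmem htgt

end AuxLemmas
section AuxLemmas2

lemma ops_cons (a : QLAction) (S : QLSchedule) : ops (a :: S) = a.1 :: ops S := rfl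

lemma firstNodeOp_cons_pos {o : Op} {t : ℕ} {S : QLSchedule} {x : Node}
    (h : o.src = x ∨ o.tgt = x) : firstNodeOp ((o, t) :: S) x = some o := by
  unfold firstNodeOp
  rw [ops_cons, List.find?_cons_of_pos]
  simpa using h

lemma firstNodeOp_cons_neg {o : Op} {t : ℕ} {S : QLSchedule} {x : Node}
    (h1 : o.src ≠ x) (h2 : o.tgt ≠ x) :
    firstNodeOp ((o, t) :: S) x = firstNodeOp S x := by
  unfold firstNodeOp
  rw [ops_cons, List.find?_cons_of_neg]
  simp [h1, h2]

lemma firstEdgeOp_cons_pos {o : Op} {t : ℕ} {S : QLSchedule} {e : Edge}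
    (h : o.edge = e) : firstEdgeOp ((o, t) :: S) e = some o := by
  unfold firstEdgeOp
  rw [ops_cons, List.find?_cons_of_pos]
  simpa using h

lemma firstEdgeOp_cons_neg {o : Op} {t : ℕ} {S : QLSchedule} {e : Edge}
    (h : o.edge ≠ e) : firstEdgeOp ((o, t) :: S) e = firstEdgeOp S e := by
  unfold firstEdgeOp
  rw [ops_cons, List.find?_cons_of_neg]
  simpa using h

lemma mem_NminI {S : QLSchedule} {x : Node} : x ∈ NminI S ↔
    (∃ l n, firstNodeOp S x = some (Op.add x l n)) ∨
    (∃ l n, firstNodeOp S x = some (Op.del x l n)) ∨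
    (∃ m l, firstNodeOp S x = some (Op.del m l x)) := by
  simp [NminI, Set.mem_union, Set.mem_setOf_eq, or_assoc]

lemma mem_NmaxI {S : QLSchedule} {x : Node} : x ∈ NmaxI S ↔
    ¬ ∃ m l, firstNodeOp S x = some (Op.add m l x) := Iff.rfl

lemma mem_EminI {S : QLSchedule} {e : Edge} : e ∈ EminI S ↔
    firstEdgeOp S e = some (Op.del e.1 e.2.1 e.2.2) := Iff.rfl

lemma mem_EmaxI {S : QLSchedule} {e : Edge} : e ∈ EmaxI S ↔
    e ∈ EminI S ∨ (¬ occursTgt S e.1 ∧ ¬ occursTgt S e.2.2) := by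
  simp [EmaxI, Set.mem_union, Set.mem_setOf_eq]

lemma nmin_of_tail {o : Op} {t : ℕ} {S : QLSchedule} {x : Node}
    (h1 : o.src ≠ x) (h2 : o.tgt ≠ x) :
    x ∈ NminI ((o, t) :: S) ↔ x ∈ NminI S := by
  rw [mem_NminI, mem_NminI, firstNodeOp_cons_neg h1 h2]

lemma nmax_of_tail {o : Op} {t : ℕ} {S : QLSchedule} {x : Node}
    (h1 : o.src ≠ x) (h2 : o.tgt ≠ x) :
    x ∈ NmaxI ((o, t) :: S) ↔ x ∈ NmaxI S := by
  rw [mem_NmaxI, mem_NmaxI, firstNodeOp_cons_neg h1 h2]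

lemma emin_of_tail {o : Op} {t : ℕ} {S : QLSchedule} {e : Edge}
    (h : o.edge ≠ e) : e ∈ EminI ((o, t) :: S) ↔ e ∈ EminI S := by
  rw [mem_EminI, mem_EminI, firstEdgeOp_cons_neg h]

lemma occursTgt_cons {o : Op} {t : ℕ} {S : QLSchedule} {y : Node} :
    occursTgt ((o, t) :: S) y ↔ o.tgt = y ∨ occursTgt S y := by
  simp [occursTgt, ops_cons]

lemma occursTgt_head {o : Op} {t : ℕ} (S : QLSchedule) : occursTgt ((o, t) :: S) o.tgt :=
  occursTgt_cons.mpr (Or.inl rfl)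

/-- Number of operations in `S` whose target is `x`. -/
def countT (S : QLSchedule) (x : Node) : ℕ :=
  ((ops S).filter (fun o => o.tgt == x)).length

/-- Number of operations in `S` on the edge `e`. -/
def countE (S : QLSchedule) (e : Edge) : ℕ :=
  ((ops S).filter (fun o => o.edge == e)).length

lemma countT_cons (o : Op) (t : ℕ) (S : QLSchedule) (x : Node) :
    countT ((o, t) :: S) x = countT S x + (if o.tgt = x then 1 else 0) := by
  simp only [countT, ops_cons, List.filter_cons]
  by_cases h : o.tgt = x <;> simp [h]

lemma countE_cons (o : Op) (t : ℕ) (S : QLSchedule) (e : Edge) :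
    countE ((o, t) :: S) e = countE S e + (if o.edge = e then 1 else 0) := by
  simp only [countE, ops_cons, List.filter_cons]
  by_cases h : o.edge = e <;> simp [h]

lemma applyQL_cons {a : QLAction} {S : QLSchedule} {T T' : Tree3} :
    applyQL (a :: S) T = some T' ↔
    ∃ T₁, applyOp a.1 T = some T₁ ∧ applyQL S T₁ = some T' := by
  show (applyOp a.1 T).bind (applyQL S) = some T' ↔ _
  exact Option.bind_eq_some_iff

/-- The "flip" lemma: membership in the output is membership in the input XOR'd with
the parity of the number of relevant operations. -/
lemma flip_run : ∀ (S : QLSchedule) (T T' : Tree3), IsDT T → applyQL S T = some T' →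
    T'.root = T.root ∧ (∀ x, x ∈ T'.N ↔ (x ∈ T.N ↔ Even (countT S x))) ∧
    (∀ e, e ∈ T'.E ↔ (e ∈ T.E ↔ Even (countE S e))) := by
  intro S
  induction S with
  | nil =>
      intro T T' hT h
      simp only [applyQL] at h
      obtain rfl := Option.some.inj h
      refine ⟨rfl, fun x => ?_, fun e => ?_⟩ <;>
        simp [countT, countE, ops]
  | cons a S ih =>
      obtain ⟨o, t⟩ := a
      intro T T' hT h
      obtain ⟨T₁, h₁, h₂⟩ := applyQL_cons.mp h
      cases o with
      | add m l n =>
          obtain ⟨rfl, hne, hDT₁, hmN, hnN, hmn⟩ := add_ok hT h₁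
          obtain ⟨hroot, hN, hE⟩ := ih _ _ hDT₁ h₂
          refine ⟨hroot, fun x => ?_, fun e => ?_⟩
          · rw [hN x, countT_cons]
            by_cases hx : n = x
            · subst hx
              simp only [Op.tgt, if_pos rfl]
              simp [hnN, Nat.even_add_one]
            · simp only [Op.tgt, if_neg hx]
              have : x ≠ n := fun h' => hx h'.symm
              simp [Finset.mem_insert, this, hx]
          · rw [hE e, countE_cons]
            by_cases hx : (m, l, n) = e
            · subst hx
              simp only [Op.edge, if_pos rfl]
              simp [hne, Nat.even_add_one]
            · simp only [Op.edge, if_neg hx]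
              have : e ≠ (m, l, n) := fun h' => hx h'.symm
              simp [Finset.mem_insert, this, hx]
      | del m l n =>
          obtain ⟨rfl, hmem, hDT₁, hmn, hnr, hout, huniq, hmN, hnN⟩ := del_ok hT h₁
          obtain ⟨hroot, hN, hE⟩ := ih _ _ hDT₁ h₂
          refine ⟨hroot, fun x => ?_, fun e => ?_⟩
          · rw [hN x, countT_cons]
            by_cases hx : n = x
            · subst hx
              simp only [Op.tgt, if_pos rfl]
              simp [hnN, Nat.even_add_one, Finset.notMem_erase]
            · simp only [Op.tgt, if_neg hx]
              have : x ≠ n := fun h' => hx h'.symm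
              simp [Finset.mem_erase, this, hx]
          · rw [hE e, countE_cons]
            by_cases hx : (m, l, n) = e
            · subst hx
              simp only [Op.edge, if_pos rfl]
              simp [hmem, Nat.even_add_one, Finset.notMem_erase]
            · simp only [Op.edge, if_neg hx]
              have : e ≠ (m, l, n) := fun h' => hx h'.symm
              simp [Finset.mem_erase, this, hx]

end AuxLemmas2
section AuxLemmas3

/-- If `S` is defined on the document tree `T`, then `T` is a basic input tree of `S`. -/
lemma fwd : ∀ (S : QLSchedule) (T T' : Tree3), IsDT T → applyQL S T = some T' →
    (∀ x, x ∈ NminI S → x ∈ T.N) ∧ (∀ x, x ∈ T.N → x ∈ NmaxI S) ∧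
    (∀ e, e ∈ EminI S → e ∈ T.E) ∧ (∀ e, e ∈ T.E → e ∈ EmaxI S) := by
  intro S
  induction S with
  | nil =>
      intro T T' hT h
      refine ⟨?_, ?_, ?_, ?_⟩
      · intro x hx; rw [mem_NminI] at hx
        rcases hx with ⟨l, n, h'⟩ | ⟨l, n, h'⟩ | ⟨m, l, h'⟩ <;>
          simp [firstNodeOp, ops] at h'
      · intro x _; rw [mem_NmaxI]; rintro ⟨m, l, h'⟩; simp [firstNodeOp, ops] at h'
      · intro e he; rw [mem_EminI] at he; simp [firstEdgeOp, ops] at he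
      · intro e _; rw [mem_EmaxI]; right; simp [occursTgt, ops]
  | cons a S ih =>
      obtain ⟨o, t⟩ := a
      intro T T' hT h
      obtain ⟨T₁, h₁, h₂⟩ := applyQL_cons.mp h
      cases o with
      | add m l n =>
          obtain ⟨rfl, hne, hDT₁, hmN, hnN, hmn⟩ := add_ok hT h₁
          have ih' := ih _ _ hDT₁ h₂
          refine ⟨?_, ?_, ?_, ?_⟩
          · intro x hx
            by_cases hsx : m = x
            · exact hsx ▸ hmN
            by_cases htx : n = x
            · exfalso
              rw [mem_NminI, firstNodeOp_cons_pos (o := Op.add m l n) (Or.inr htx)] at hx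
              rcases hx with ⟨l₀, n₀, h'⟩ | ⟨l₀, n₀, h'⟩ | ⟨m₀, l₀, h'⟩
              · injection h' with h''; injection h'' with a1 a2 a3; exact hsx a1
              · injection h' with h''; injection h''
              · injection h' with h''; injection h''
            · have hx' : x ∈ NminI S := (nmin_of_tail (o := Op.add m l n) hsx htx).mp hx
              rcases Finset.mem_insert.mp (ih'.1 x hx') with h' | h'
              · exact absurd h'.symm htx
              · exact h'
          · intro x hxN
            rw [mem_NmaxI]
            rintro ⟨m₀, l₀, hfo⟩
            by_cases hsx : m = x
            · rw [firstNodeOp_cons_pos (o := Op.add m l n) (Or.inl hsx)] at hfo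
              injection hfo with h''; injection h'' with a1 a2 a3
              exact hnN (by rw [a3]; exact hxN)
            by_cases htx : n = x
            · exact hnN (by rw [htx]; exact hxN)
            · rw [firstNodeOp_cons_neg (o := Op.add m l n) hsx htx] at hfo
              exact mem_NmaxI.mp (ih'.2.1 x (Finset.mem_insert_of_mem hxN)) ⟨m₀, l₀, hfo⟩
          · intro e he
            by_cases hee : (m, l, n) = e
            · exfalso
              rw [mem_EminI, firstEdgeOp_cons_pos (o := Op.add m l n) hee] at he
              injection he with h''; injection h''
            · have he' : e ∈ EminI S := (emin_of_tail (o := Op.add m l n) hee).mp he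
              rcases Finset.mem_insert.mp (ih'.2.2.1 e he') with h' | h'
              · exact absurd h'.symm hee
              · exact h'
          · intro e heE
            have h4 := ih'.2.2.2 e (Finset.mem_insert_of_mem heE)
            rw [mem_EmaxI] at h4 ⊢
            rcases h4 with h4 | ⟨hf1, hf2⟩
            · left
              have hee : (Op.add m l n).edge ≠ e := fun h' => hne (by rw [show (m, l, n) = e from h']; exact heE)
              exact (emin_of_tail (o := Op.add m l n) hee).mpr h4
            · right
              have hend := hT.2.1 e heE
              have hne1 : n ≠ e.1 := fun h' => hnN (by rw [h']; exact hend.1)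
              have hne2 : n ≠ e.2.2 := fun h' => hnN (by rw [h']; exact hend.2)
              refine ⟨?_, ?_⟩ <;> rw [occursTgt_cons] <;> rintro (h' | h')
              exacts [hne1 h', hf1 h', hne2 h', hf2 h']
      | del m l n =>
          obtain ⟨rfl, hmem, hDT₁, hmn, hnr, hout, huniqn, hmN, hnN⟩ := del_ok hT h₁
          have ih' := ih _ _ hDT₁ h₂
          refine ⟨?_, ?_, ?_, ?_⟩
          · intro x hx
            by_cases hsx : m = x
            · exact hsx ▸ hmN
            by_cases htx : n = x
            · exact htx ▸ hnN
            · have hx' : x ∈ NminI S := (nmin_of_tail (o := Op.del m l n) hsx htx).mp hx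
              exact Finset.mem_of_mem_erase (ih'.1 x hx')
          · intro x hxN
            rw [mem_NmaxI]
            rintro ⟨m₀, l₀, hfo⟩
            by_cases hsx : m = x
            · rw [firstNodeOp_cons_pos (o := Op.del m l n) (Or.inl hsx)] at hfo
              injection hfo with h''; injection h''
            by_cases htx : n = x
            · rw [firstNodeOp_cons_pos (o := Op.del m l n) (Or.inr htx)] at hfo
              injection hfo with h''; injection h''
            · rw [firstNodeOp_cons_neg (o := Op.del m l n) hsx htx] at hfo
              have hxe : x ∈ T.N.erase n :=
                Finset.mem_erase.mpr ⟨fun h' => htx h'.symm, hxN⟩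
              exact mem_NmaxI.mp (ih'.2.1 x hxe) ⟨m₀, l₀, hfo⟩
          · intro e he
            by_cases hee : (m, l, n) = e
            · exact hee ▸ hmem
            · have he' : e ∈ EminI S := (emin_of_tail (o := Op.del m l n) hee).mp he
              exact Finset.mem_of_mem_erase (ih'.2.2.1 e he')
          · intro e heE
            by_cases hee : (m, l, n) = e
            · subst hee
              left
              rw [mem_EminI, firstEdgeOp_cons_pos (o := Op.del m l n) (e := (m, l, n)) rfl]
            · have heE' : e ∈ T.E.erase (m, l, n) :=
                Finset.mem_erase.mpr ⟨fun h' => hee h'.symm, heE⟩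
              have h4 := ih'.2.2.2 e heE'
              rw [mem_EmaxI] at h4 ⊢
              rcases h4 with h4 | ⟨hf1, hf2⟩
              · left; exact (emin_of_tail (o := Op.del m l n) hee).mpr h4
              · right
                have hne1 : n ≠ e.1 := fun h' => hout e heE h'.symm
                have hne2 : n ≠ e.2.2 := fun h' => hee (huniqn e heE h'.symm).symm
                refine ⟨?_, ?_⟩ <;> rw [occursTgt_cons] <;> rintro (h' | h')
                exacts [hne1 h', hf1 h', hne2 h', hf2 h']

end AuxLemmas3
section AuxLemmas4

lemma occursTgt_tail_mono {a : QLAction} {S : QLSchedule} {y : Node}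
    (h : occursTgt S y) : occursTgt (a :: S) y := by
  obtain ⟨o, ho, hy⟩ := h
  exact ⟨o, by rw [ops_cons]; exact List.mem_cons_of_mem _ ho, hy⟩

lemma reach_erase {E : Finset Edge} {r n : Node} {d : Edge}
    (hout : ∀ e ∈ E, e.1 ≠ n) (hd : d.2.2 = n) :
    ∀ x, Relation.ReflTransGen (estep ↑E) r x → x ≠ n →
      Relation.ReflTransGen (estep ↑(E.erase d)) r x := by
  intro x h
  induction h with
  | refl => intro _; exact Relation.ReflTransGen.refl
  | @tail b c hb he ih =>
      intro hc
      obtain ⟨l', hel⟩ := he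
      have hbn : b ≠ n := hout _ (Finset.mem_coe.mp hel)
      refine (ih hbn).tail ⟨l', Finset.mem_coe.mpr
        (Finset.mem_erase.mpr ⟨?_, Finset.mem_coe.mp hel⟩)⟩
      intro hde
      exact hc (by rw [← hd, ← hde])

/-- If the consistent schedule `S` is defined on some document tree, then it is defined
on every basic input tree. -/
lemma bwd : ∀ (S : QLSchedule) (T₀ T : Tree3), IsDT T₀ → (applyQL S T₀).isSome →
    IsDT T → (∀ x, x ∈ NminI S → x ∈ T.N) → (∀ x, x ∈ T.N → x ∈ NmaxI S) →
    (∀ e, e ∈ EminI S → e ∈ T.E) → (∀ e, e ∈ T.E → e ∈ EmaxI S) →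
    (applyQL S T).isSome := by
  intro S
  induction S with
  | nil => intro T₀ T _ _ _ _ _ _ _; simp [applyQL]
  | cons a S ih =>
      obtain ⟨o, t⟩ := a
      intro T₀ T hT₀ hsome hT hNmin hNmax hEmin hEmax
      obtain ⟨T₀', hrun⟩ := Option.isSome_iff_exists.mp hsome
      obtain ⟨T₀₁, h₀₁, h₀₂⟩ := applyQL_cons.mp hrun
      cases o with
      | add m l n =>
          obtain ⟨rfl, hne₀, hDT₀₁, hmN₀, hnN₀, hmn₀⟩ := add_ok hT₀ h₀₁
          have fwdS := fwd S _ _ hDT₀₁ h₀₂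
          have hmT : m ∈ T.N := hNmin m (mem_NminI.mpr (Or.inl ⟨l, n,
            firstNodeOp_cons_pos (o := Op.add m l n) (Or.inl rfl)⟩))
          have hnT : n ∉ T.N := fun hn => mem_NmaxI.mp (hNmax n hn)
            ⟨m, l, firstNodeOp_cons_pos (o := Op.add m l n) (Or.inr rfl)⟩
          have hmnT : m ≠ n := fun h' => hnT (h' ▸ hmT)
          have hneT : (m, l, n) ∉ T.E := by
            intro hmemT
            rcases mem_EmaxI.mp (hEmax _ hmemT) with hE | ⟨_, hf2⟩
            · rw [mem_EminI,
                firstEdgeOp_cons_pos (o := Op.add m l n) (e := (m, l, n)) (t := t) rfl] at hE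
              injection hE with h''; injection h''
            · exact hf2 (occursTgt_head (o := Op.add m l n) (t := t) S)
          have hDT' : IsDT ⟨insert n T.N, insert (m, l, n) T.E, T.root⟩ := by
            refine ⟨Finset.mem_insert_of_mem hT.1, ?_, ?_, ?_, ?_⟩
            · intro e heE
              rcases Finset.mem_insert.mp heE with rfl | heE
              · exact ⟨Finset.mem_insert_of_mem hmT, Finset.mem_insert_self _ _⟩
              · exact ⟨Finset.mem_insert_of_mem (hT.2.1 e heE).1,
                  Finset.mem_insert_of_mem (hT.2.1 e heE).2⟩
            · intro e heE e' heE' htgt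
              rcases Finset.mem_insert.mp heE with rfl | heE <;>
                rcases Finset.mem_insert.mp heE' with rfl | heE'
              · rfl
              · exfalso
                exact hnT (by rw [show n = e'.2.2 from htgt]; exact (hT.2.1 e' heE').2)
              · exfalso
                exact hnT (by rw [show n = e.2.2 from htgt.symm]; exact (hT.2.1 e heE).2)
              · exact hT.2.2.1 e heE e' heE' htgt
            · intro e heE
              rcases Finset.mem_insert.mp heE with rfl | heE
              · exact fun h' => hnT (by rw [show n = T.root from h']; exact hT.1)
              · exact hT.2.2.2.1 e heE
            · intro x hx
              have hsub : (↑T.E : Set Edge) ⊆ ↑(insert (m, l, n) T.E) := fun e he =>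
                Finset.mem_coe.mpr (Finset.mem_insert_of_mem (Finset.mem_coe.mp he))
              rcases Finset.mem_insert.mp hx with rfl | hx
              · exact (reach_mono' hsub (hT.2.2.2.2 m hmT)).tail
                  ⟨l, Finset.mem_coe.mpr (Finset.mem_insert_self _ _)⟩
              · exact reach_mono' hsub (hT.2.2.2.2 x hx)
          have happ : applyOp (Op.add m l n) T =
              some ⟨insert n T.N, insert (m, l, n) T.E, T.root⟩ := by
            simp only [applyOp]
            split_ifs with hcond
            · exact absurd hcond (not_or.mpr ⟨hneT, not_not_intro hDT'⟩)
            · rfl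
          have hstep : applyQL ((Op.add m l n, t) :: S) T =
              applyQL S ⟨insert n T.N, insert (m, l, n) T.E, T.root⟩ := by
            show (applyOp (Op.add m l n) T).bind (applyQL S) = _
            rw [happ, Option.bind_some]
          rw [hstep]
          refine ih _ _ hDT₀₁ (by rw [h₀₂]; rfl) hDT' ?_ ?_ ?_ ?_
          · intro x hx
            by_cases htx : x = n
            · subst htx; exact Finset.mem_insert_self _ _
            by_cases hsx : x = m
            · subst hsx; exact Finset.mem_insert_of_mem hmT
            · have hx' : x ∈ NminI ((Op.add m l n, t) :: S) :=
                (nmin_of_tail (o := Op.add m l n)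
                  (fun h => hsx h.symm) (fun h => htx h.symm)).mpr hx
              exact Finset.mem_insert_of_mem (hNmin x hx')
          · intro x hx
            rcases Finset.mem_insert.mp hx with rfl | hx
            · exact fwdS.2.1 _ (Finset.mem_insert_self _ _)
            by_cases hsx : x = m
            · subst hsx; exact fwdS.2.1 _ (Finset.mem_insert_of_mem hmN₀)
            by_cases htx : x = n
            · subst htx; exact fwdS.2.1 _ (Finset.mem_insert_self _ _)
            · exact (nmax_of_tail (o := Op.add m l n)
                (fun h => hsx h.symm) (fun h => htx h.symm)).mp (hNmax x hx)
          · intro e he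
            by_cases hee : e = (m, l, n)
            · subst hee; exact Finset.mem_insert_self _ _
            · have he' : e ∈ EminI ((Op.add m l n, t) :: S) :=
                (emin_of_tail (o := Op.add m l n) (fun h => hee h.symm)).mpr he
              exact Finset.mem_insert_of_mem (hEmin e he')
          · intro e he
            rcases Finset.mem_insert.mp he with rfl | he
            · exact fwdS.2.2.2 _ (Finset.mem_insert_self _ _)
            · have hee : e ≠ (m, l, n) := fun h' => hneT (h' ▸ he)
              rcases mem_EmaxI.mp (hEmax e he) with hE | ⟨hf1, hf2⟩
              · rw [mem_EmaxI]; left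
                exact (emin_of_tail (o := Op.add m l n) (fun h => hee h.symm)).mp hE
              · rw [mem_EmaxI]; right
                exact ⟨fun h' => hf1 (occursTgt_tail_mono h'),
                  fun h' => hf2 (occursTgt_tail_mono h')⟩
      | del m l n =>
          obtain ⟨rfl, hmem₀, hDT₀₁, hmn₀, hnr₀, hout₀, huniq₀, hmN₀, hnN₀⟩ := del_ok hT₀ h₀₁
          have fwdS := fwd S _ _ hDT₀₁ h₀₂
          have hmemT : (m, l, n) ∈ T.E := hEmin _ (by
            rw [mem_EminI, firstEdgeOp_cons_pos (o := Op.del m l n) (e := (m, l, n)) (t := t) rfl])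
          have hmT : m ∈ T.N := (hT.2.1 _ hmemT).1
          have hnT : n ∈ T.N := (hT.2.1 _ hmemT).2
          have hmnT : m ≠ n := fun h' => not_self_loop hT (h' ▸ hmemT)
          have hnrT : n ≠ T.root := fun h' => hT.2.2.2.1 _ hmemT h'
          have houtT : ∀ e ∈ T.E, e.1 ≠ n := by
            intro e heE h1
            have hee : e ≠ (m, l, n) := by
              intro h'; rw [h'] at h1; exact hmnT h1
            rcases mem_EmaxI.mp (hEmax e heE) with hE | ⟨hf1, _⟩
            · have he' : e ∈ EminI S :=
                (emin_of_tail (o := Op.del m l n) (t := t) (fun h => hee h.symm)).mp hE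
              have heT₀₁ := fwdS.2.2.1 e he'
              have h2 := (hDT₀₁.2.1 e heT₀₁).1
              rw [h1] at h2
              exact Finset.notMem_erase _ _ h2
            · exact hf1 (by rw [h1]; exact occursTgt_head (o := Op.del m l n) (t := t) S)
          have huniqT : ∀ e ∈ T.E, e.2.2 = n → e = (m, l, n) := fun e heE h' =>
            hT.2.2.1 e heE _ hmemT h'
          have hDT' : IsDT ⟨T.N.erase n, T.E.erase (m, l, n), T.root⟩ := by
            refine ⟨Finset.mem_erase.mpr ⟨fun h => hnrT h.symm, hT.1⟩, ?_, ?_, ?_, ?_⟩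
            · intro e heE
              obtain ⟨hee, heE⟩ := Finset.mem_erase.mp heE
              exact ⟨Finset.mem_erase.mpr ⟨houtT e heE, (hT.2.1 e heE).1⟩,
                Finset.mem_erase.mpr ⟨fun h' => hee (huniqT e heE h'), (hT.2.1 e heE).2⟩⟩
            · intro e heE e' heE' h'
              exact hT.2.2.1 e (Finset.mem_erase.mp heE).2 e' (Finset.mem_erase.mp heE').2 h'
            · intro e heE
              exact hT.2.2.2.1 e (Finset.mem_erase.mp heE).2
            · intro x hx
              obtain ⟨hxn, hxN⟩ := Finset.mem_erase.mp hx
              exact reach_erase houtT rfl x (hT.2.2.2.2 x hxN) hxn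
          have happ : applyOp (Op.del m l n) T =
              some ⟨T.N.erase n, T.E.erase (m, l, n), T.root⟩ := by
            simp only [applyOp]
            split_ifs with hcond
            · exact absurd hcond (not_or.mpr ⟨not_not_intro hmemT, not_not_intro hDT'⟩)
            · rfl
          have hstep : applyQL ((Op.del m l n, t) :: S) T =
              applyQL S ⟨T.N.erase n, T.E.erase (m, l, n), T.root⟩ := by
            show (applyOp (Op.del m l n) T).bind (applyQL S) = _
            rw [happ, Option.bind_some]
          rw [hstep]
          refine ih _ _ hDT₀₁ (by rw [h₀₂]; rfl) hDT' ?_ ?_ ?_ ?_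
          · intro x hx
            by_cases htx : x = n
            · exfalso; subst htx
              exact Finset.notMem_erase _ _ (fwdS.1 x hx)
            by_cases hsx : x = m
            · subst hsx; exact Finset.mem_erase.mpr ⟨hmnT, hmT⟩
            · have hx' : x ∈ NminI ((Op.del m l n, t) :: S) := (nmin_of_tail (o := Op.del m l n)
                (fun h => hsx h.symm) (fun h => htx h.symm)).mpr hx
              exact Finset.mem_erase.mpr ⟨htx, hNmin x hx'⟩
          · intro x hx
            obtain ⟨hxn, hxN⟩ := Finset.mem_erase.mp hx
            by_cases hsx : x = m
            · subst hsx
              exact fwdS.2.1 _ (Finset.mem_erase.mpr ⟨hmn₀, hmN₀⟩)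
            · exact (nmax_of_tail (o := Op.del m l n)
                (fun h => hsx h.symm) (fun h => hxn h.symm)).mp (hNmax x hxN)
          · intro e he
            by_cases hee : e = (m, l, n)
            · exfalso; subst hee
              exact Finset.notMem_erase _ _ (fwdS.2.2.1 _ he)
            · have he' : e ∈ EminI ((Op.del m l n, t) :: S) :=
                (emin_of_tail (o := Op.del m l n) (fun h => hee h.symm)).mpr he
              exact Finset.mem_erase.mpr ⟨hee, hEmin e he'⟩
          · intro e he
            obtain ⟨hee, heE⟩ := Finset.mem_erase.mp he
            rcases mem_EmaxI.mp (hEmax e heE) with hE | ⟨hf1, hf2⟩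
            · rw [mem_EmaxI]; left
              exact (emin_of_tail (o := Op.del m l n) (fun h => hee h.symm)).mp hE
            · rw [mem_EmaxI]; right
              exact ⟨fun h' => hf1 (occursTgt_tail_mono h'),
                fun h' => hf2 (occursTgt_tail_mono h')⟩

end AuxLemmas4
section AuxLemmas5

lemma exists_split {α : Type} {l : List α} {a : α} (h : a ∈ l) :
    ∃ l₁ l₂, a ∉ l₁ ∧ l = l₁ ++ a :: l₂ := by
  induction l with
  | nil => cases h
  | cons b l' ih =>
      by_cases hb : b = a
      · exact ⟨[], l', by simp, by rw [hb]; rfl⟩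
      · have h' : a ∈ l' := by
          rcases List.mem_cons.mp h with h'' | h''
          · exact absurd h''.symm hb
          · exact h''
        obtain ⟨l₁, l₂, hnot, hdec⟩ := ih h'
        exact ⟨b :: l₁, l₂, by
          simp only [List.mem_cons, not_or]
          exact ⟨fun hh => hb hh.symm, hnot⟩, by rw [hdec]; rfl⟩

lemma sametrans_perm : ∀ {S₁ S₂ : QLSchedule}, SameTrans S₁ S₂ → S₁.Perm S₂ := by
  intro S₁
  induction S₁ with
  | nil =>
      intro S₂ h
      cases S₂ with
      | nil => exact List.Perm.refl _
      | cons b S₂' =>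
          have hb := h b.2
          rw [List.filter_cons_of_pos (by simp)] at hb
          simp at hb
  | cons a S₁' ih =>
      intro S₂ h
      have ha : a ∈ S₂ := by
        have hb := h a.2
        rw [List.filter_cons_of_pos (by simp)] at hb
        have hm : a ∈ S₂.filter (fun x => x.2 == a.2) := by
          rw [← hb]; exact List.mem_cons_self
        exact (List.mem_filter.mp hm).1
      obtain ⟨l₁, l₂, hnot, rfl⟩ := exists_split ha
      have hST : SameTrans S₁' (l₁ ++ l₂) := by
        intro t
        have hb := h t
        rw [List.filter_append] at *
        by_cases hta : a.2 = t
        · have hpa : ((fun x : QLAction => x.2 == t) a) = true := by simp [hta]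
          rw [List.filter_cons_of_pos (l := S₁') hpa,
            List.filter_cons_of_pos (l := l₂) hpa] at hb
          have hl₁ : List.filter (fun x => x.2 == t) l₁ = [] := by
            cases hfil : List.filter (fun x => x.2 == t) l₁ with
            | nil => rfl
            | cons c cs =>
                exfalso
                rw [hfil] at hb
                have hac : a = c := by
                  have := congrArg (fun l => l.head?) hb
                  simpa using this
                have : c ∈ List.filter (fun x => x.2 == t) l₁ := by
                  rw [hfil]; exact List.mem_cons_self
                exact hnot (hac ▸ (List.mem_filter.mp this).1)
          rw [hl₁] at hb ⊢
          rw [List.nil_append] at hb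
          exact List.cons.inj hb |>.2
        · have hpa : ¬ ((fun x : QLAction => x.2 == t) a) = true := by simp [hta]
          rw [List.filter_cons_of_neg (l := S₁') hpa,
            List.filter_cons_of_neg (l := l₂) hpa] at hb
          exact hb
      exact ((ih hST).cons a).trans List.perm_middle.symm

lemma ops_perm {S₁ S₂ : QLSchedule} (h : SameTrans S₁ S₂) : (ops S₁).Perm (ops S₂) :=
  (sametrans_perm h).map Prod.fst

lemma countT_eq {S₁ S₂ : QLSchedule} (h : (ops S₁).Perm (ops S₂)) (x : Node) :
    countT S₁ x = countT S₂ x := (h.filter _).length_eq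

lemma countE_eq {S₁ S₂ : QLSchedule} (h : (ops S₁).Perm (ops S₂)) (e : Edge) :
    countE S₁ e = countE S₂ e := (h.filter _).length_eq

lemma occursTgt_iff {S₁ S₂ : QLSchedule} (h : (ops S₁).Perm (ops S₂)) (y : Node) :
    occursTgt S₁ y ↔ occursTgt S₂ y := by
  unfold occursTgt
  constructor <;> rintro ⟨o, ho, hy⟩
  · exact ⟨o, h.mem_iff.mp ho, hy⟩
  · exact ⟨o, h.mem_iff.mpr ho, hy⟩

lemma firstNodeOp_isSome_trans {S₁ S₂ : QLSchedule} (h : (ops S₁).Perm (ops S₂)) (x : Node)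
    (hs : (firstNodeOp S₁ x).isSome) : (firstNodeOp S₂ x).isSome := by
  unfold firstNodeOp at *
  obtain ⟨o, ho, hc⟩ := List.find?_isSome.mp hs
  exact List.find?_isSome.mpr ⟨o, h.mem_iff.mp ho, hc⟩

lemma firstEdgeOp_isSome_trans {S₁ S₂ : QLSchedule} (h : (ops S₁).Perm (ops S₂)) (e : Edge)
    (hs : (firstEdgeOp S₁ e).isSome) : (firstEdgeOp S₂ e).isSome := by
  unfold firstEdgeOp at *
  obtain ⟨o, ho, hc⟩ := List.find?_isSome.mp hs
  exact List.find?_isSome.mpr ⟨o, h.mem_iff.mp ho, hc⟩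

lemma nmin_occ {S : QLSchedule} {x : Node} (h : x ∈ NminI S) :
    (firstNodeOp S x).isSome := by
  rcases mem_NminI.mp h with ⟨l, n, h'⟩ | ⟨l, n, h'⟩ | ⟨m, l, h'⟩ <;> rw [h'] <;> rfl

lemma not_nmax_occ {S : QLSchedule} {x : Node} (h : x ∉ NmaxI S) :
    (firstNodeOp S x).isSome := by
  have h' : ∃ m l, firstNodeOp S x = some (Op.add m l x) := by
    by_contra hc; exact h (mem_NmaxI.mpr hc)
  obtain ⟨m, l, h'⟩ := h'
  rw [h']; rfl

lemma emin_occ {S : QLSchedule} {e : Edge} (h : e ∈ EminI S) :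
    (firstEdgeOp S e).isSome := by rw [mem_EminI.mp h]; rfl

lemma occ_cases {S : QLSchedule} {x : Node} (h : (firstNodeOp S x).isSome) :
    x ∈ NminI S ∨ x ∉ NmaxI S := by
  obtain ⟨o, ho⟩ := Option.isSome_iff_exists.mp h
  have ho' : (ops S).find? (fun o => (o.src == x) || (o.tgt == x)) = some o := ho
  have hp := List.find?_some ho'
  rcases o with ⟨a, b, c⟩ | ⟨a, b, c⟩
  · simp only [Op.src, Op.tgt, Bool.or_eq_true, beq_iff_eq] at hp
    rcases hp with rfl | rfl
    · exact Or.inl (mem_NminI.mpr (Or.inl ⟨b, c, ho⟩))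
    · exact Or.inr (fun hmax => mem_NmaxI.mp hmax ⟨a, b, ho⟩)
  · simp only [Op.src, Op.tgt, Bool.or_eq_true, beq_iff_eq] at hp
    rcases hp with rfl | rfl
    · exact Or.inl (mem_NminI.mpr (Or.inr (Or.inl ⟨b, c, ho⟩)))
    · exact Or.inl (mem_NminI.mpr (Or.inr (Or.inr ⟨a, b, ho⟩)))

lemma occE_cases {S : QLSchedule} {e : Edge} (h : (firstEdgeOp S e).isSome) :
    e ∈ EminI S ∨ firstEdgeOp S e = some (Op.add e.1 e.2.1 e.2.2) := by
  obtain ⟨o, ho⟩ := Option.isSome_iff_exists.mp h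
  have ho' : (ops S).find? (fun o => o.edge == e) = some o := ho
  have hp := List.find?_some ho'
  rw [beq_iff_eq] at hp
  rcases o with ⟨a, b, c⟩ | ⟨a, b, c⟩
  · simp only [Op.edge] at hp
    subst hp
    exact Or.inr (by rw [ho])
  · simp only [Op.edge] at hp
    subst hp
    exact Or.inl (by rw [mem_EminI, ho])

lemma nmin_subset {S₁ S₂ : QLSchedule} {T₀ A B : Tree3} (hDT : IsDT T₀)
    (hA : applyQL S₁ T₀ = some A) (hB : applyQL S₂ T₀ = some B)
    (hperm : (ops S₁).Perm (ops S₂)) : NminI S₁ ⊆ NminI S₂ := by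
  intro x hx
  have hxT : x ∈ T₀.N := (fwd S₁ T₀ A hDT hA).1 x hx
  have hocc₂ : (firstNodeOp S₂ x).isSome := firstNodeOp_isSome_trans hperm x (nmin_occ hx)
  rcases occ_cases hocc₂ with h2 | h2
  · exact h2
  · exact absurd ((fwd S₂ T₀ B hDT hB).2.1 x hxT) h2

lemma nmax_compl_subset {S₁ S₂ : QLSchedule} {T₀ A B : Tree3} (hDT : IsDT T₀)
    (hA : applyQL S₁ T₀ = some A) (hB : applyQL S₂ T₀ = some B)
    (hperm : (ops S₁).Perm (ops S₂)) : ∀ x, x ∉ NmaxI S₁ → x ∉ NmaxI S₂ := by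
  intro x hx hx₂
  have hxT : x ∉ T₀.N := fun hm => hx ((fwd S₁ T₀ A hDT hA).2.1 x hm)
  have hocc₂ : (firstNodeOp S₂ x).isSome := firstNodeOp_isSome_trans hperm x (not_nmax_occ hx)
  rcases occ_cases hocc₂ with h2 | h2
  · exact hxT ((fwd S₂ T₀ B hDT hB).1 x h2)
  · exact h2 hx₂

lemma emin_subset {S₁ S₂ : QLSchedule} {T₀ A B : Tree3} (hDT : IsDT T₀)
    (hA : applyQL S₁ T₀ = some A) (hB : applyQL S₂ T₀ = some B)
    (hperm : (ops S₁).Perm (ops S₂)) : EminI S₁ ⊆ EminI S₂ := by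
  intro e he
  have heT : e ∈ T₀.E := (fwd S₁ T₀ A hDT hA).2.2.1 e he
  have hocc₂ : (firstEdgeOp S₂ e).isSome := firstEdgeOp_isSome_trans hperm e (emin_occ he)
  rcases occE_cases hocc₂ with h2 | h2
  · exact h2
  · exfalso
    rcases mem_EmaxI.mp ((fwd S₂ T₀ B hDT hB).2.2.2 e heT) with h3 | ⟨_, hf2⟩
    · rw [mem_EminI, h2] at h3
      injection h3 with h''; injection h''
    · have ho' : (ops S₂).find? (fun o => o.edge == e) = some (Op.add e.1 e.2.1 e.2.2) := h2
      exact hf2 ⟨Op.add e.1 e.2.1 e.2.2, List.mem_of_find?_eq_some ho', rfl⟩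

end AuxLemmas5

/-- Two consistent QL schedules over the same set of transactions are
equivalent iff they have the same set of basic input trees, i.e. iff their four basic
input sets coincide. -/
theorem equiv_iff_same_basic_input (S₁ S₂ : QLSchedule)
    (h₁ : ConsistentQL S₁) (h₂ : ConsistentQL S₂) (hsame : SameTrans S₁ S₂) :
    EquivQL S₁ S₂ ↔
      (NminI S₁ = NminI S₂ ∧ NmaxI S₁ = NmaxI S₂ ∧
       EminI S₁ = EminI S₂ ∧ EmaxI S₁ = EmaxI S₂) := by
  obtain ⟨T₀, hT₀DT, hT₀some⟩ := h₁
  have hperm : (ops S₁).Perm (ops S₂) := ops_perm hsame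
  constructor
  · rintro ⟨-, heq⟩
    have hT₀some₂ : (applyQL S₂ T₀).isSome := by rw [← heq T₀ hT₀DT]; exact hT₀some
    obtain ⟨A, hA⟩ := Option.isSome_iff_exists.mp hT₀some
    obtain ⟨B, hB⟩ := Option.isSome_iff_exists.mp hT₀some₂
    have hN : NminI S₁ = NminI S₂ :=
      Set.Subset.antisymm (nmin_subset hT₀DT hA hB hperm)
        (nmin_subset hT₀DT hB hA hperm.symm)
    have hE : EminI S₁ = EminI S₂ :=
      Set.Subset.antisymm (emin_subset hT₀DT hA hB hperm)
        (emin_subset hT₀DT hB hA hperm.symm)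
    refine ⟨hN, ?_, hE, ?_⟩
    · ext x
      constructor <;> intro hx
      · by_contra hc
        exact nmax_compl_subset hT₀DT hB hA hperm.symm x hc hx
      · by_contra hc
        exact nmax_compl_subset hT₀DT hA hB hperm x hc hx
    · ext e
      rw [mem_EmaxI, mem_EmaxI, hE, occursTgt_iff hperm, occursTgt_iff hperm]
  · rintro ⟨hN, hM, hE, hF⟩
    refine ⟨⟨T₀, hT₀DT, hT₀some⟩, ?_⟩
    intro T hT
    by_cases hd : (applyQL S₁ T).isSome
    · obtain ⟨A, hA⟩ := Option.isSome_iff_exists.mp hd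
      have f₁ := fwd S₁ T A hT hA
      obtain ⟨U₀, hU₀DT, hU₀some⟩ := h₂
      have hd₂ : (applyQL S₂ T).isSome := by
        refine bwd S₂ U₀ T hU₀DT hU₀some hT ?_ ?_ ?_ ?_
        · intro x hx; exact f₁.1 x (by rw [hN]; exact hx)
        · intro x hx; rw [← hM]; exact f₁.2.1 x hx
        · intro e he; exact f₁.2.2.1 e (by rw [hE]; exact he)
        · intro e he; rw [← hF]; exact f₁.2.2.2 e he
      obtain ⟨B, hB⟩ := Option.isSome_iff_exists.mp hd₂
      obtain ⟨hrA, hNA, hEA⟩ := flip_run S₁ T A hT hA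
      obtain ⟨hrB, hNB, hEB⟩ := flip_run S₂ T B hT hB
      have hNN : A.N = B.N := by
        ext x; rw [hNA x, hNB x, countT_eq hperm x]
      have hEE : A.E = B.E := by
        ext e; rw [hEA e, hEB e, countE_eq hperm e]
      have hrr : A.root = B.root := by rw [hrA, hrB]
      have hAB : A = B := by
        cases A; cases B
        simp only [Tree3.mk.injEq]
        exact ⟨hNN, hEE, hrr⟩
      rw [hA, hB, hAB]
    · have hd₂ : ¬ (applyQL S₂ T).isSome := by
        intro hs
        apply hd
        obtain ⟨B, hB⟩ := Option.isSome_iff_exists.mp hs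
        have f₂ := fwd S₂ T B hT hB
        refine bwd S₁ T₀ T hT₀DT hT₀some hT ?_ ?_ ?_ ?_
        · intro x hx; exact f₂.1 x (by rw [← hN]; exact hx)
        · intro x hx; rw [hM]; exact f₂.2.1 x hx
        · intro e he; exact f₂.2.2.1 e (by rw [← hE]; exact he)
        · intro e he; rw [hF]; exact f₂.2.2.2 e he
      rw [Option.not_isSome_iff_eq_none] at hd hd₂
      rw [hd, hd₂]
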